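/- For every integer n ≥ 0, f_2(n) = 2^{2n-1}·C(3n/2, n) - 2^{2n-1}·C(3n/2 - 1/2, n), where the binomial coefficients on the right are generalized binomial coefficients with rational upper arguments (equivalently, 2·f_2(n) = 4^n·(C(3n/2, n) - C((3n-1)/2, n))). -/

import Mathlib

open Finset

/-- Generalized binomial coefficient `C(q, k) = q(q-1)⋯(q-k+1)/k!` for rational `q`. -/
noncomputable def qchoose (q : ℚ) (k : ℕ) : ℚ :=
  (∏ j ∈ Finset.range k, (q - j)) / (k.factorial : ℚ)

/-- `f₂(n) = Σ_{i=n}^{2n-1} C(3n, n+i+1)·C(i, n)` (so `f₂(0) = 0`). -/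
def f2 (n : ℕ) : ℕ :=
  ∑ i ∈ Finset.Icc n (2 * n - 1), (3 * n).choose (n + i + 1) * i.choose n


/-- `W b c m = [x^m] (1+x)^b (1-x)^{-(c+1)}`. -/
def Wc (b c m : ℕ) : ℚ :=
  ∑ k ∈ Finset.range (m+1), ((b.choose k : ℚ) * ((m - k + c).choose c : ℚ))

lemma WP (b c m : ℕ) : Wc (b+1) c (m+1) = Wc b c (m+1) + Wc b c m := by
  unfold Wc
  rw [Finset.sum_range_succ' (fun k => ((b+1).choose k : ℚ) * ((m + 1 - k + c).choose c : ℚ)) (m+1)]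
  rw [Finset.sum_range_succ' (fun k => ((b).choose k : ℚ) * ((m + 1 - k + c).choose c : ℚ)) (m+1)]
  have h1 : ∀ k, ((b+1).choose (k+1) : ℚ) = (b.choose k : ℚ) + (b.choose (k+1) : ℚ) := by
    intro k; rw [Nat.choose_succ_succ]; push_cast; ring
  have h2 : ∀ k, m + 1 - (k+1) = m - k := fun k => Nat.succ_sub_succ m k
  simp only [h1, h2, add_mul, Finset.sum_add_distrib, Nat.choose_zero_right]
  ring

lemma WQ (b c m : ℕ) : Wc b (c+1) (m+1) = Wc b (c+1) m + Wc b c (m+1) := by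
  unfold Wc
  rw [Finset.sum_range_succ (fun k => ((b).choose k : ℚ) * ((m + 1 - k + (c+1)).choose (c+1) : ℚ)) (m+1)]
  rw [Finset.sum_range_succ (fun k => ((b).choose k : ℚ) * ((m + 1 - k + c).choose c : ℚ)) (m+1)]
  have key : ∀ k ∈ Finset.range (m+1),
      ((b).choose k : ℚ) * ((m + 1 - k + (c+1)).choose (c+1) : ℚ)
      = ((b).choose k : ℚ) * ((m - k + (c+1)).choose (c+1) : ℚ)
        + ((b).choose k : ℚ) * ((m + 1 - k + c).choose c : ℚ) := by
    intro k hk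
    rw [Finset.mem_range] at hk
    have hnat : (m + 1 - k + (c+1)).choose (c+1)
        = (m + 1 - k + c).choose c + (m - k + (c+1)).choose (c+1) := by
      have e1 : m + 1 - k + (c+1) = (m - k + c + 1) + 1 := by omega
      have e2 : m - k + (c+1) = m - k + c + 1 := by omega
      have e3 : m + 1 - k + c = m - k + c + 1 := by omega
      rw [e1, e2, e3]
      exact Nat.choose_succ_succ _ _
    rw [hnat]; push_cast; ring
  rw [Finset.sum_congr rfl key, Finset.sum_add_distrib]
  have l1 : (m + 1 - (m+1) + (c+1)).choose (c+1) = 1 := by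
    have : m + 1 - (m+1) + (c+1) = c+1 := by omega
    rw [this, Nat.choose_self]
  have l2 : (m + 1 - (m+1) + c).choose c = 1 := by
    have : m + 1 - (m+1) + c = c := by omega
    rw [this, Nat.choose_self]
  rw [l1, l2]
  push_cast
  ring

lemma WD (b c m : ℕ) : ((m:ℚ)+1) * Wc (b+1) c (m+1)
    = ((b:ℚ)+1) * Wc b c m + ((c:ℚ)+1) * Wc (b+1) (c+1) m := by
  unfold Wc
  rw [Finset.mul_sum]
  have split : ∀ k ∈ Finset.range (m+2),
      ((m:ℚ)+1) * (((b+1).choose k : ℚ) * ((m + 1 - k + c).choose c : ℚ))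
      = (k : ℚ) * (((b+1).choose k : ℚ) * ((m + 1 - k + c).choose c : ℚ))
        + ((c:ℚ)+1) * (((b+1).choose k : ℚ) * ((m + 1 - k + c).choose (c+1) : ℚ)) := by
    intro k hk
    rw [Finset.mem_range] at hk
    have hQ : ((m + 1 - k : ℕ) : ℚ) * ((m + 1 - k + c).choose c : ℚ)
        = ((c:ℚ)+1) * ((m + 1 - k + c).choose (c+1) : ℚ) := by
      have h := Nat.choose_succ_right_eq (m + 1 - k + c) c
      have e : m + 1 - k + c - c = m + 1 - k := by omega
      rw [e] at h
      have h' : ((m + 1 - k + c).choose (c+1) : ℚ) * ((c:ℚ)+1)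
          = ((m + 1 - k + c).choose c : ℚ) * ((m + 1 - k : ℕ) : ℚ) := by
        exact_mod_cast congrArg (fun t : ℕ => (t : ℚ)) h
      linear_combination -h'
    have h0 : k + (m + 1 - k) = m + 1 := by omega
    have hm : ((m:ℚ) + 1) = (k : ℚ) + ((m + 1 - k : ℕ) : ℚ) := by
      exact_mod_cast (congrArg (fun t : ℕ => (t:ℚ)) h0).symm
    rw [hm]
    linear_combination ((b+1).choose k : ℚ) * hQ
  rw [Finset.sum_congr rfl split, Finset.sum_add_distrib]
  congr 1
  · rw [Finset.sum_range_succ' (fun k => (k : ℚ) * (((b+1).choose k : ℚ) * ((m + 1 - k + c).choose c : ℚ))) (m+1)]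
    rw [Finset.mul_sum]
    have h2 : ∀ k, m + 1 - (k+1) = m - k := fun k => Nat.succ_sub_succ m k
    simp only [h2, Nat.cast_zero, zero_mul, add_zero]
    apply Finset.sum_congr rfl
    intro k hk
    have h := Nat.add_one_mul_choose_eq b k
    have hch : (((b+1).choose (k+1) : ℚ)) * ((k:ℚ)+1) = ((b:ℚ)+1) * (b.choose k : ℚ) := by
      exact_mod_cast (congrArg (fun t : ℕ => (t:ℚ)) h).symm
    push_cast
    linear_combination ((m - k + c).choose c : ℚ) * hch
  · rw [Finset.sum_range_succ (fun k => ((c:ℚ)+1) * (((b+1).choose k : ℚ) * ((m + 1 - k + c).choose (c+1) : ℚ))) (m+1)]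
    have l0 : (m + 1 - (m+1) + c).choose (c+1) = 0 := by
      have : m + 1 - (m+1) + c = c := by omega
      rw [this, Nat.choose_succ_self]
    rw [l0, Finset.mul_sum]
    push_cast
    rw [mul_zero, mul_zero, add_zero]
    apply Finset.sum_congr rfl
    intro k hk
    rw [Finset.mem_range] at hk
    have e : m + 1 - k + c = m - k + (c+1) := by omega
    rw [e]

lemma WP' (b b' c m m' : ℕ) (hb : b' = b+1) (hm : m' = m+1) :
    Wc b' c m' = Wc b c m' + Wc b c m := by subst hb hm; exact WP b c m

lemma WQ' (b c c' m m' : ℕ) (hc : c' = c+1) (hm : m' = m+1) :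
    Wc b c' m' = Wc b c' m + Wc b c m' := by subst hc hm; exact WQ b c m

lemma WD' (b b' c c' m m' : ℕ) (hb : b' = b+1) (hc : c' = c+1) (hm : m' = m+1) :
    ((m':ℕ) : ℚ) * Wc b' c m' = ((b':ℕ) : ℚ) * Wc b c m + ((c':ℕ) : ℚ) * Wc b' c' m := by
  subst hb hc hm
  push_cast
  exact WD b c m

lemma prod_top (q : ℚ) (n : ℕ) :
    ∏ j ∈ Finset.range (n+1), (q + 1 - j) = (∏ j ∈ Finset.range n, (q - j)) * (q + 1) := by
  rw [Finset.prod_range_succ' (fun j => q + 1 - (j : ℕ))]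
  congr 1
  · apply Finset.prod_congr rfl
    intro j _
    push_cast
    ring
  · norm_num

lemma prod_shift (q : ℚ) (n : ℕ) :
    (∏ j ∈ Finset.range n, (q + 1 - j)) * (q + 1 - n) = (∏ j ∈ Finset.range n, (q - j)) * (q + 1) := by
  rw [← prod_top q n, Finset.prod_range_succ]

lemma qA (n : ℕ) : 2*((n:ℚ)+1) * qchoose (3*(n:ℚ)/2 + 3/2) (n+1)
    = 3*(3*(n:ℚ)+1) * qchoose (3*(n:ℚ)/2 - 1/2) n := by
  unfold qchoose
  have hf : ((n.factorial : ℚ)) ≠ 0 := by exact_mod_cast n.factorial_ne_zero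
  have hne : ((n:ℚ)+1) ≠ 0 := by positivity
  have hc : (((n:ℚ)+1) * (n.factorial : ℚ)) ≠ 0 := mul_ne_zero hne hf
  have e0 : ∏ j ∈ Finset.range (n+1), (3*(n:ℚ)/2 + 3/2 - j)
      = ∏ j ∈ Finset.range (n+1), (3*(n:ℚ)/2 - 1/2 + 1 + 1 - j) := by
    apply Finset.prod_congr rfl; intro j _; ring
  have e1 := prod_top (3*(n:ℚ)/2 - 1/2 + 1) n
  have e2 := prod_shift (3*(n:ℚ)/2 - 1/2) n
  rw [Nat.factorial_succ, e0, e1]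
  rw [Nat.cast_mul, Nat.cast_add, Nat.cast_one]
  rw [← mul_div_assoc, ← mul_div_assoc, div_eq_div_iff hc hf]
  linear_combination (6*((n:ℚ)+1)*(n.factorial:ℚ)) * e2

lemma qB (n : ℕ) : 2*((n:ℚ)+1) * qchoose (3*(n:ℚ)/2 + 1) (n+1)
    = (3*(n:ℚ)+2) * qchoose (3*(n:ℚ)/2) n := by
  unfold qchoose
  have hf : ((n.factorial : ℚ)) ≠ 0 := by exact_mod_cast n.factorial_ne_zero
  have hne : ((n:ℚ)+1) ≠ 0 := by positivity
  have hc : (((n:ℚ)+1) * (n.factorial : ℚ)) ≠ 0 := mul_ne_zero hne hf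
  have e1 := prod_top (3*(n:ℚ)/2) n
  rw [Nat.factorial_succ, e1]
  rw [Nat.cast_mul, Nat.cast_add, Nat.cast_one]
  rw [← mul_div_assoc, ← mul_div_assoc, div_eq_div_iff hc hf]
  ring

lemma f2_link (m : ℕ) : ((f2 (m+1) : ℕ) : ℚ) = Wc (3*m+3) (m+1) m := by
  unfold f2 Wc
  have e : 2*(m+1) - 1 = 2*m+1 := by omega
  rw [e, ← Finset.Ico_add_one_right_eq_Icc, Finset.sum_Ico_eq_sum_range]
  have e2 : 2*m+1+1 - (m+1) = m+1 := by omega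
  rw [e2, ← Finset.sum_range_reflect]
  push_cast
  apply Finset.sum_congr rfl
  intro j hj
  rw [Finset.mem_range] at hj
  have hj' : j ≤ m := Nat.lt_succ_iff.mp hj
  have h1 : (3*(m+1)).choose ((m+1) + ((m+1) + (m - j)) + 1) = (3*m+3).choose j := by
    have e3 : (m+1) + ((m+1) + (m - j)) + 1 = (3*m+3) - j := by omega
    have e4 : 3*(m+1) = 3*m+3 := by ring
    rw [e3, e4, Nat.choose_symm (by omega)]
  have h2 : ((m+1) + (m - j)).choose (m+1) = (m - j + (m+1)).choose (m+1) := by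
    congr 1
    omega
  rw [h1, h2]

lemma K1 (p : ℕ) :
    ((p:ℚ)+5) * (3 * Wc (3*p+15) (p+5) (p+4) + 3 * Wc (3*p+14) (p+4) (p+4))
      = 6*(3*(p:ℚ)+13) * (Wc (3*p+12) (p+4) (p+3) + 3 * Wc (3*p+11) (p+3) (p+3)) := by
  apply mul_left_cancel₀ (show ((p:ℚ)+4) ≠ 0 by positivity)
  have h1 := WQ' (3*p+10) (p+2) (p+3) (p+1) (p+2) (by omega) (by omega)
  have h2 := WP' (3*p+10) (3*p+11) (p+2) (p+2) (p+3) (by omega) (by omega)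
  have h3 := WQ' (3*p+10) (p+2) (p+3) (p+2) (p+3) (by omega) (by omega)
  have h4 := WP' (3*p+10) (3*p+11) (p+2) (p+3) (p+4) (by omega) (by omega)
  have h5 := WQ' (3*p+10) (p+2) (p+3) (p+3) (p+4) (by omega) (by omega)
  have h6 := WP' (3*p+10) (3*p+11) (p+3) (p+1) (p+2) (by omega) (by omega)
  have h7 := WQ' (3*p+10) (p+3) (p+4) (p+1) (p+2) (by omega) (by omega)
  have h8 := WP' (3*p+10) (3*p+11) (p+3) (p+2) (p+3) (by omega) (by omega)
  have h9 := WQ' (3*p+10) (p+3) (p+4) (p+2) (p+3) (by omega) (by omega)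
  have h10 := WQ' (3*p+10) (p+3) (p+4) (p+3) (p+4) (by omega) (by omega)
  have h11 := WP' (3*p+10) (3*p+11) (p+4) (p+1) (p+2) (by omega) (by omega)
  have h12 := WQ' (3*p+10) (p+4) (p+5) (p+1) (p+2) (by omega) (by omega)
  have h13 := WP' (3*p+10) (3*p+11) (p+4) (p+2) (p+3) (by omega) (by omega)
  have h14 := WQ' (3*p+10) (p+4) (p+5) (p+2) (p+3) (by omega) (by omega)
  have h15 := WP' (3*p+10) (3*p+11) (p+4) (p+3) (p+4) (by omega) (by omega)
  have h16 := WQ' (3*p+10) (p+4) (p+5) (p+3) (p+4) (by omega) (by omega)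
  have h17 := WP' (3*p+10) (3*p+11) (p+5) (p+1) (p+2) (by omega) (by omega)
  have h18 := WP' (3*p+10) (3*p+11) (p+5) (p+2) (p+3) (by omega) (by omega)
  have h19 := WP' (3*p+10) (3*p+11) (p+5) (p+3) (p+4) (by omega) (by omega)
  have h20 := WD' (3*p+10) (3*p+11) (p+2) (p+3) (p+2) (p+3) (by omega) (by omega) (by omega)
  have h21 := WD' (3*p+10) (3*p+11) (p+2) (p+3) (p+3) (p+4) (by omega) (by omega) (by omega)
  have h22 := WQ' (3*p+11) (p+3) (p+4) (p+1) (p+2) (by omega) (by omega)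
  have h23 := WD' (3*p+10) (3*p+11) (p+3) (p+4) (p+1) (p+2) (by omega) (by omega) (by omega)
  have h24 := WQ' (3*p+11) (p+4) (p+5) (p+1) (p+2) (by omega) (by omega)
  have h25 := WD' (3*p+10) (3*p+11) (p+4) (p+5) (p+1) (p+2) (by omega) (by omega) (by omega)
  have h26 := WP' (3*p+11) (3*p+12) (p+4) (p+2) (p+3) (by omega) (by omega)
  have h27 := WP' (3*p+11) (3*p+12) (p+4) (p+3) (p+4) (by omega) (by omega)
  have h28 := WP' (3*p+11) (3*p+12) (p+5) (p+1) (p+2) (by omega) (by omega)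
  have h29 := WP' (3*p+11) (3*p+12) (p+5) (p+2) (p+3) (by omega) (by omega)
  have h30 := WP' (3*p+11) (3*p+12) (p+5) (p+3) (p+4) (by omega) (by omega)
  have h31 := WQ' (3*p+12) (p+4) (p+5) (p+1) (p+2) (by omega) (by omega)
  have h32 := WP' (3*p+12) (3*p+13) (p+4) (p+2) (p+3) (by omega) (by omega)
  have h33 := WP' (3*p+12) (3*p+13) (p+4) (p+3) (p+4) (by omega) (by omega)
  have h34 := WP' (3*p+12) (3*p+13) (p+5) (p+1) (p+2) (by omega) (by omega)
  have h35 := WP' (3*p+12) (3*p+13) (p+5) (p+2) (p+3) (by omega) (by omega)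
  have h36 := WP' (3*p+12) (3*p+13) (p+5) (p+3) (p+4) (by omega) (by omega)
  have h37 := WP' (3*p+13) (3*p+14) (p+4) (p+3) (p+4) (by omega) (by omega)
  have h38 := WP' (3*p+13) (3*p+14) (p+5) (p+2) (p+3) (by omega) (by omega)
  have h39 := WP' (3*p+13) (3*p+14) (p+5) (p+3) (p+4) (by omega) (by omega)
  have h40 := WP' (3*p+14) (3*p+15) (p+5) (p+3) (p+4) (by omega) (by omega)
  push_cast at h20 h21 h23 h25
  linear_combination
    ((288 : ℚ) + (168 : ℚ)*(p:ℚ) + (24 : ℚ)*(p:ℚ)^2) * h1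
    + ((108 : ℚ) + (72 : ℚ)*(p:ℚ) + (12 : ℚ)*(p:ℚ)^2) * h2
    + ((-318 : ℚ) + (-174 : ℚ)*(p:ℚ) + (-24 : ℚ)*(p:ℚ)^2) * h3
    + ((-120 : ℚ) + (-54 : ℚ)*(p:ℚ) + (-6 : ℚ)*(p:ℚ)^2) * h4
    + ((120 : ℚ) + (54 : ℚ)*(p:ℚ) + (6 : ℚ)*(p:ℚ)^2) * h5
    + ((108 : ℚ) + (72 : ℚ)*(p:ℚ) + (12 : ℚ)*(p:ℚ)^2) * h6
    + ((1344 : ℚ) + (672 : ℚ)*(p:ℚ) + (84 : ℚ)*(p:ℚ)^2) * h7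
    + ((-846 : ℚ) + (-402 : ℚ)*(p:ℚ) + (-48 : ℚ)*(p:ℚ)^2) * h8
    + ((408 : ℚ) + (174 : ℚ)*(p:ℚ) + (18 : ℚ)*(p:ℚ)^2) * h9
    + ((120 : ℚ) + (54 : ℚ)*(p:ℚ) + (6 : ℚ)*(p:ℚ)^2) * h10
    + ((768 : ℚ) + (432 : ℚ)*(p:ℚ) + (60 : ℚ)*(p:ℚ)^2) * h11
    + ((300 : ℚ) + (135 : ℚ)*(p:ℚ) + (15 : ℚ)*(p:ℚ)^2) * h12
    + ((-132 : ℚ) + (-69 : ℚ)*(p:ℚ) + (-9 : ℚ)*(p:ℚ)^2) * h13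
    + ((360 : ℚ) + (162 : ℚ)*(p:ℚ) + (18 : ℚ)*(p:ℚ)^2) * h14
    + ((60 : ℚ) + (27 : ℚ)*(p:ℚ) + (3 : ℚ)*(p:ℚ)^2) * h15
    + ((60 : ℚ) + (27 : ℚ)*(p:ℚ) + (3 : ℚ)*(p:ℚ)^2) * h16
    + ((-300 : ℚ) + (-135 : ℚ)*(p:ℚ) + (-15 : ℚ)*(p:ℚ)^2) * h17
    + ((240 : ℚ) + (108 : ℚ)*(p:ℚ) + (12 : ℚ)*(p:ℚ)^2) * h18
    + ((60 : ℚ) + (27 : ℚ)*(p:ℚ) + (3 : ℚ)*(p:ℚ)^2) * h19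
    + ((-36 : ℚ) + (-12 : ℚ)*(p:ℚ)) * h20
    + ((30 : ℚ) + (6 : ℚ)*(p:ℚ)) * h21
    + ((144 : ℚ) + (84 : ℚ)*(p:ℚ) + (12 : ℚ)*(p:ℚ)^2) * h22
    + ((-36 : ℚ) + (-12 : ℚ)*(p:ℚ)) * h23
    + ((720 : ℚ) + (324 : ℚ)*(p:ℚ) + (36 : ℚ)*(p:ℚ)^2) * h24
    + ((-192 : ℚ) + (-48 : ℚ)*(p:ℚ)) * h25
    + ((-192 : ℚ) + (-96 : ℚ)*(p:ℚ) + (-12 : ℚ)*(p:ℚ)^2) * h26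
    + ((60 : ℚ) + (27 : ℚ)*(p:ℚ) + (3 : ℚ)*(p:ℚ)^2) * h27
    + ((240 : ℚ) + (108 : ℚ)*(p:ℚ) + (12 : ℚ)*(p:ℚ)^2) * h28
    + ((180 : ℚ) + (81 : ℚ)*(p:ℚ) + (9 : ℚ)*(p:ℚ)^2) * h29
    + ((60 : ℚ) + (27 : ℚ)*(p:ℚ) + (3 : ℚ)*(p:ℚ)^2) * h30
    + ((-60 : ℚ) + (-27 : ℚ)*(p:ℚ) + (-3 : ℚ)*(p:ℚ)^2) * h31
    + ((60 : ℚ) + (27 : ℚ)*(p:ℚ) + (3 : ℚ)*(p:ℚ)^2) * h32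
    + ((60 : ℚ) + (27 : ℚ)*(p:ℚ) + (3 : ℚ)*(p:ℚ)^2) * h33
    + ((60 : ℚ) + (27 : ℚ)*(p:ℚ) + (3 : ℚ)*(p:ℚ)^2) * h34
    + ((120 : ℚ) + (54 : ℚ)*(p:ℚ) + (6 : ℚ)*(p:ℚ)^2) * h35
    + ((60 : ℚ) + (27 : ℚ)*(p:ℚ) + (3 : ℚ)*(p:ℚ)^2) * h36
    + ((60 : ℚ) + (27 : ℚ)*(p:ℚ) + (3 : ℚ)*(p:ℚ)^2) * h37
    + ((60 : ℚ) + (27 : ℚ)*(p:ℚ) + (3 : ℚ)*(p:ℚ)^2) * h38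
    + ((60 : ℚ) + (27 : ℚ)*(p:ℚ) + (3 : ℚ)*(p:ℚ)^2) * h39
    + ((60 : ℚ) + (27 : ℚ)*(p:ℚ) + (3 : ℚ)*(p:ℚ)^2) * h40

lemma K2 (p : ℕ) :
    ((p:ℚ)+5) * (Wc (3*p+15) (p+5) (p+4) + 3 * Wc (3*p+14) (p+4) (p+4))
      = 2*(3*(p:ℚ)+14) * (3 * Wc (3*p+12) (p+4) (p+3) + 3 * Wc (3*p+11) (p+3) (p+3)) := by
  apply mul_left_cancel₀ (show ((p:ℚ)+4) ≠ 0 by positivity)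
  have h1 := WQ' (3*p+10) (p+2) (p+3) (p+1) (p+2) (by omega) (by omega)
  have h2 := WP' (3*p+10) (3*p+11) (p+2) (p+2) (p+3) (by omega) (by omega)
  have h3 := WQ' (3*p+10) (p+2) (p+3) (p+2) (p+3) (by omega) (by omega)
  have h4 := WP' (3*p+10) (3*p+11) (p+2) (p+3) (p+4) (by omega) (by omega)
  have h5 := WQ' (3*p+10) (p+2) (p+3) (p+3) (p+4) (by omega) (by omega)
  have h6 := WP' (3*p+10) (3*p+11) (p+3) (p+1) (p+2) (by omega) (by omega)
  have h7 := WQ' (3*p+10) (p+3) (p+4) (p+1) (p+2) (by omega) (by omega)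
  have h8 := WP' (3*p+10) (3*p+11) (p+3) (p+2) (p+3) (by omega) (by omega)
  have h9 := WQ' (3*p+10) (p+3) (p+4) (p+2) (p+3) (by omega) (by omega)
  have h10 := WQ' (3*p+10) (p+3) (p+4) (p+3) (p+4) (by omega) (by omega)
  have h11 := WP' (3*p+10) (3*p+11) (p+4) (p+1) (p+2) (by omega) (by omega)
  have h12 := WQ' (3*p+10) (p+4) (p+5) (p+1) (p+2) (by omega) (by omega)
  have h13 := WP' (3*p+10) (3*p+11) (p+4) (p+2) (p+3) (by omega) (by omega)
  have h14 := WQ' (3*p+10) (p+4) (p+5) (p+2) (p+3) (by omega) (by omega)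
  have h15 := WP' (3*p+10) (3*p+11) (p+4) (p+3) (p+4) (by omega) (by omega)
  have h16 := WQ' (3*p+10) (p+4) (p+5) (p+3) (p+4) (by omega) (by omega)
  have h17 := WP' (3*p+10) (3*p+11) (p+5) (p+1) (p+2) (by omega) (by omega)
  have h18 := WP' (3*p+10) (3*p+11) (p+5) (p+2) (p+3) (by omega) (by omega)
  have h19 := WP' (3*p+10) (3*p+11) (p+5) (p+3) (p+4) (by omega) (by omega)
  have h20 := WD' (3*p+10) (3*p+11) (p+2) (p+3) (p+2) (p+3) (by omega) (by omega) (by omega)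
  have h21 := WD' (3*p+10) (3*p+11) (p+2) (p+3) (p+3) (p+4) (by omega) (by omega) (by omega)
  have h22 := WQ' (3*p+11) (p+3) (p+4) (p+1) (p+2) (by omega) (by omega)
  have h23 := WD' (3*p+10) (3*p+11) (p+3) (p+4) (p+1) (p+2) (by omega) (by omega) (by omega)
  have h24 := WP' (3*p+11) (3*p+12) (p+4) (p+1) (p+2) (by omega) (by omega)
  have h25 := WQ' (3*p+11) (p+4) (p+5) (p+1) (p+2) (by omega) (by omega)
  have h26 := WD' (3*p+10) (3*p+11) (p+4) (p+5) (p+1) (p+2) (by omega) (by omega) (by omega)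
  have h27 := WP' (3*p+11) (3*p+12) (p+4) (p+2) (p+3) (by omega) (by omega)
  have h28 := WP' (3*p+11) (3*p+12) (p+4) (p+3) (p+4) (by omega) (by omega)
  have h29 := WP' (3*p+11) (3*p+12) (p+5) (p+1) (p+2) (by omega) (by omega)
  have h30 := WP' (3*p+11) (3*p+12) (p+5) (p+2) (p+3) (by omega) (by omega)
  have h31 := WP' (3*p+11) (3*p+12) (p+5) (p+3) (p+4) (by omega) (by omega)
  have h32 := WQ' (3*p+12) (p+4) (p+5) (p+1) (p+2) (by omega) (by omega)
  have h33 := WP' (3*p+12) (3*p+13) (p+4) (p+2) (p+3) (by omega) (by omega)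
  have h34 := WP' (3*p+12) (3*p+13) (p+4) (p+3) (p+4) (by omega) (by omega)
  have h35 := WP' (3*p+12) (3*p+13) (p+5) (p+1) (p+2) (by omega) (by omega)
  have h36 := WP' (3*p+12) (3*p+13) (p+5) (p+2) (p+3) (by omega) (by omega)
  have h37 := WP' (3*p+12) (3*p+13) (p+5) (p+3) (p+4) (by omega) (by omega)
  have h38 := WP' (3*p+13) (3*p+14) (p+4) (p+3) (p+4) (by omega) (by omega)
  have h39 := WP' (3*p+13) (3*p+14) (p+5) (p+2) (p+3) (by omega) (by omega)
  have h40 := WP' (3*p+13) (3*p+14) (p+5) (p+3) (p+4) (by omega) (by omega)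
  have h41 := WP' (3*p+14) (3*p+15) (p+5) (p+3) (p+4) (by omega) (by omega)
  push_cast at h20 h21 h23 h26
  linear_combination
    ((-128 : ℚ) + (-48 : ℚ)*(p:ℚ) + (-4 : ℚ)*(p:ℚ)^2) * h1
    + ((-48 : ℚ) + (-22 : ℚ)*(p:ℚ) + (-2 : ℚ)*(p:ℚ)^2) * h2
    + ((-92 : ℚ) + (-46 : ℚ)*(p:ℚ) + (-6 : ℚ)*(p:ℚ)^2) * h3
    + ((-80 : ℚ) + (-36 : ℚ)*(p:ℚ) + (-4 : ℚ)*(p:ℚ)^2) * h4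
    + ((80 : ℚ) + (36 : ℚ)*(p:ℚ) + (4 : ℚ)*(p:ℚ)^2) * h5
    + ((-136 : ℚ) + (-68 : ℚ)*(p:ℚ) + (-8 : ℚ)*(p:ℚ)^2) * h6
    + ((376 : ℚ) + (190 : ℚ)*(p:ℚ) + (24 : ℚ)*(p:ℚ)^2) * h7
    + ((-276 : ℚ) + (-124 : ℚ)*(p:ℚ) + (-14 : ℚ)*(p:ℚ)^2) * h8
    + ((104 : ℚ) + (42 : ℚ)*(p:ℚ) + (4 : ℚ)*(p:ℚ)^2) * h9
    + ((80 : ℚ) + (36 : ℚ)*(p:ℚ) + (4 : ℚ)*(p:ℚ)^2) * h10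
    + ((328 : ℚ) + (178 : ℚ)*(p:ℚ) + (24 : ℚ)*(p:ℚ)^2) * h11
    + ((100 : ℚ) + (45 : ℚ)*(p:ℚ) + (5 : ℚ)*(p:ℚ)^2) * h12
    + ((-156 : ℚ) + (-75 : ℚ)*(p:ℚ) + (-9 : ℚ)*(p:ℚ)^2) * h13
    + ((120 : ℚ) + (54 : ℚ)*(p:ℚ) + (6 : ℚ)*(p:ℚ)^2) * h14
    + ((60 : ℚ) + (27 : ℚ)*(p:ℚ) + (3 : ℚ)*(p:ℚ)^2) * h15
    + ((20 : ℚ) + (9 : ℚ)*(p:ℚ) + (1 : ℚ)*(p:ℚ)^2) * h16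
    + ((-100 : ℚ) + (-45 : ℚ)*(p:ℚ) + (-5 : ℚ)*(p:ℚ)^2) * h17
    + ((80 : ℚ) + (36 : ℚ)*(p:ℚ) + (4 : ℚ)*(p:ℚ)^2) * h18
    + ((20 : ℚ) + (9 : ℚ)*(p:ℚ) + (1 : ℚ)*(p:ℚ)^2) * h19
    + ((16 : ℚ) + (2 : ℚ)*(p:ℚ)) * h20
    + ((20 : ℚ) + (4 : ℚ)*(p:ℚ)) * h21
    + ((-136 : ℚ) + (-58 : ℚ)*(p:ℚ) + (-6 : ℚ)*(p:ℚ)^2) * h22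
    + ((24 : ℚ) + (4 : ℚ)*(p:ℚ)) * h23
    + ((40 : ℚ) + (18 : ℚ)*(p:ℚ) + (2 : ℚ)*(p:ℚ)^2) * h24
    + ((240 : ℚ) + (108 : ℚ)*(p:ℚ) + (12 : ℚ)*(p:ℚ)^2) * h25
    + ((-64 : ℚ) + (-16 : ℚ)*(p:ℚ)) * h26
    + ((-216 : ℚ) + (-102 : ℚ)*(p:ℚ) + (-12 : ℚ)*(p:ℚ)^2) * h27
    + ((60 : ℚ) + (27 : ℚ)*(p:ℚ) + (3 : ℚ)*(p:ℚ)^2) * h28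
    + ((80 : ℚ) + (36 : ℚ)*(p:ℚ) + (4 : ℚ)*(p:ℚ)^2) * h29
    + ((60 : ℚ) + (27 : ℚ)*(p:ℚ) + (3 : ℚ)*(p:ℚ)^2) * h30
    + ((20 : ℚ) + (9 : ℚ)*(p:ℚ) + (1 : ℚ)*(p:ℚ)^2) * h31
    + ((-20 : ℚ) + (-9 : ℚ)*(p:ℚ) + (-1 : ℚ)*(p:ℚ)^2) * h32
    + ((60 : ℚ) + (27 : ℚ)*(p:ℚ) + (3 : ℚ)*(p:ℚ)^2) * h33
    + ((60 : ℚ) + (27 : ℚ)*(p:ℚ) + (3 : ℚ)*(p:ℚ)^2) * h34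
    + ((20 : ℚ) + (9 : ℚ)*(p:ℚ) + (1 : ℚ)*(p:ℚ)^2) * h35
    + ((40 : ℚ) + (18 : ℚ)*(p:ℚ) + (2 : ℚ)*(p:ℚ)^2) * h36
    + ((20 : ℚ) + (9 : ℚ)*(p:ℚ) + (1 : ℚ)*(p:ℚ)^2) * h37
    + ((60 : ℚ) + (27 : ℚ)*(p:ℚ) + (3 : ℚ)*(p:ℚ)^2) * h38
    + ((20 : ℚ) + (9 : ℚ)*(p:ℚ) + (1 : ℚ)*(p:ℚ)^2) * h39
    + ((20 : ℚ) + (9 : ℚ)*(p:ℚ) + (1 : ℚ)*(p:ℚ)^2) * h40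
    + ((20 : ℚ) + (9 : ℚ)*(p:ℚ) + (1 : ℚ)*(p:ℚ)^2) * h41

def StP (m : ℕ) : Prop :=
  (4:ℚ)^(m+1) * qchoose (3*(m:ℚ)/2 + 3/2) (m+1) = 3 * Wc (3*m+3) (m+1) m + 3 * Wc (3*m+2) m m
  ∧ (4:ℚ)^(m+1) * qchoose (3*(m:ℚ)/2 + 1) (m+1) = Wc (3*m+3) (m+1) m + 3 * Wc (3*m+2) m m

lemma step (p : ℕ) (hP : StP (p+3)) : StP (p+4) := by
  obtain ⟨hA, hB⟩ := hP
  have hqA := qA (p+4)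
  have hqB := qB (p+4)
  have hK1 := K1 p
  have hK2 := K2 p
  unfold StP
  push_cast at hA hB hqA hqB ⊢
  ring_nf at hA hB hqA hqB hK1 hK2 ⊢
  constructor
  · apply mul_left_cancel₀ (show (2*((p:ℚ)+5)) ≠ 0 by positivity)
    linear_combination ((4:ℚ)^(p+4)*4) * hqA + (12*(3*(p:ℚ)+13)) * hB - 2 * hK1
  · apply mul_left_cancel₀ (show (2*((p:ℚ)+5)) ≠ 0 by positivity)
    linear_combination ((4:ℚ)^(p+4)*4) * hqB + (4*(3*(p:ℚ)+14)) * hA - 2 * hK2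

lemma main_ind : ∀ m, StP m := by
  intro m
  induction m with
  | zero =>
    constructor <;>
      norm_num [Wc, qchoose, Finset.sum_range_succ, Finset.prod_range_succ, Nat.factorial]
  | succ k ih =>
    rcases Nat.lt_or_ge k 3 with hk | hk
    · interval_cases k <;>
        (constructor <;>
          (norm_num [Wc, qchoose, Finset.sum_range_succ, Finset.prod_range_succ, Nat.factorial] <;>
            norm_num [Nat.choose]))
    · obtain ⟨p, rfl⟩ : ∃ p, k = p + 3 := ⟨k - 3, by omega⟩
      exact step p ih

theorem f2_eq (n : ℕ) :
    (f2 n : ℚ) = (2 : ℚ) ^ (2 * (n : ℤ) - 1) * qchoose (3 * n / 2) n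
      - (2 : ℚ) ^ (2 * (n : ℤ) - 1) * qchoose (3 * n / 2 - 1 / 2) n := by
  cases n with
  | zero =>
    norm_num [f2, qchoose]
  | succ m =>
    obtain ⟨hA, hB⟩ := main_ind m
    rw [f2_link m]
    have hz : (2:ℚ) ^ (2 * ((m+1 : ℕ) : ℤ) - 1) = (2:ℚ) ^ (2*m+1 : ℕ) := by
      have e : (2 * ((m+1 : ℕ) : ℤ) - 1) = ((2*m+1 : ℕ) : ℤ) := by push_cast; ring
      rw [e, zpow_natCast]
    rw [hz]
    have e1 : 3 * ((m+1:ℕ):ℚ) / 2 = 3*(m:ℚ)/2 + 3/2 := by push_cast; ring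
    have e2 : 3 * ((m+1:ℕ):ℚ) / 2 - 1/2 = 3*(m:ℚ)/2 + 1 := by push_cast; ring
    rw [e2, e1]
    have h4 : (4:ℚ)^(m+1) = 2^(2*m+1) * 2 := by
      rw [show (4:ℚ) = 2^2 by norm_num, ← pow_mul]; ring
    rw [h4] at hA hB
    linear_combination (-1/2 : ℚ) * hA + (1/2 : ℚ) * hB
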